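/- Let A be the integer matrix [[1,1],[2,0]] (arising from the period doubling substitution a ↦ ab, b ↦ aa) and let G := {v ∈ ℚ² : Aⁿ v ∈ ℤ² for some n ∈ ℕ}. Then G = {a·(1,1) + b·(−1,2) + c·(1,0) : a ∈ ℤ[1/2], b, c ∈ ℤ}. -/

import Mathlib

open Matrix

private lemma castpow (M : Matrix (Fin 2) (Fin 2) ℤ) (n : ℕ) :
    (M ^ n).map (Int.cast : ℤ → ℚ) = (M.map (Int.cast : ℤ → ℚ)) ^ n := by
  simpa using map_pow (Int.castRingHom ℚ).mapMatrix M n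

private lemma castM : (!![(1:ℤ),1;2,0]).map (Int.cast : ℤ → ℚ) = !![(1:ℚ),1;2,0] := by
  ext i j; fin_cases i <;> fin_cases j <;> simp

private lemma eig1 (n : ℕ) :
    ((!![(1:ℚ),1;2,0]) ^ n).mulVec ![1,1] = ((2:ℚ) ^ n) • ![1,1] := by
  induction n with
  | zero => simp
  | succ n ih =>
    rw [pow_succ, ← mulVec_mulVec]
    have h : (!![(1:ℚ),1;2,0]).mulVec ![1,1] = (2:ℚ) • ![1,1] := by
      funext i; fin_cases i <;> norm_num [mulVec, dotProduct, Fin.sum_univ_two]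
    rw [h, mulVec_smul, ih, smul_smul]
    congr 1; ring

private lemma eig2 (n : ℕ) :
    ((!![(1:ℚ),1;2,0]) ^ n).mulVec ![-1,2] = ((-1:ℚ) ^ n) • ![-1,2] := by
  induction n with
  | zero => simp
  | succ n ih =>
    rw [pow_succ, ← mulVec_mulVec]
    have h : (!![(1:ℚ),1;2,0]).mulVec ![-1,2] = (-1:ℚ) • ![-1,2] := by
      funext i; fin_cases i <;> norm_num [mulVec, dotProduct, Fin.sum_univ_two]
    rw [h, mulVec_smul, ih, smul_smul]
    congr 1; ring

private lemma invariant (n : ℕ) (v : Fin 2 → ℚ) :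
    ((!![(1:ℚ),1;2,0]) ^ n).mulVec v 1 - ((!![(1:ℚ),1;2,0]) ^ n).mulVec v 0
      = (-1:ℚ) ^ n * (v 1 - v 0) := by
  induction n generalizing v with
  | zero => simp
  | succ n ih =>
    rw [pow_succ, ← mulVec_mulVec]
    rw [ih ((!![(1:ℚ),1;2,0]).mulVec v)]
    have h0 : (!![(1:ℚ),1;2,0]).mulVec v 0 = v 0 + v 1 := by
      simp [mulVec, dotProduct, Fin.sum_univ_two]
    have h1 : (!![(1:ℚ),1;2,0]).mulVec v 1 = 2 * v 0 := by
      simp [mulVec, dotProduct, Fin.sum_univ_two]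
    rw [h0, h1]; ring

private lemma Bpow (n : ℕ) (v : Fin 2 → ℚ) :
    ((!![(0:ℚ),1;2,-1]) ^ n).mulVec (((!![(1:ℚ),1;2,0]) ^ n).mulVec v)
      = ((2:ℚ) ^ n) • v := by
  rw [mulVec_mulVec]
  have hcomm : Commute (!![(0:ℚ),1;2,-1]) (!![(1:ℚ),1;2,0]) := by
    unfold Commute SemiconjBy
    ext i j; fin_cases i <;> fin_cases j <;>
      simp [mul_apply, Fin.sum_univ_two]
  rw [← hcomm.mul_pow]
  have hBM : (!![(0:ℚ),1;2,-1]) * (!![(1:ℚ),1;2,0]) = (2:ℚ) • 1 := by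
    ext i j; fin_cases i <;> fin_cases j <;>
      simp [mul_apply, Fin.sum_univ_two, Matrix.one_apply]
  rw [hBM, smul_pow, one_pow, smul_mulVec, one_mulVec]

/-- Let `A = [[1,1],[2,0]]` (period doubling substitution `a ↦ ab`, `b ↦ aa`) and
`G = {v ∈ ℚ² : Aⁿ v ∈ ℤ² for some n}`.  Then
`G = {a·(1,1) + b·(−1,2) + c·(1,0) : a ∈ ℤ[1/2], b, c ∈ ℤ}`. -/
theorem stmt15 :
    {v : Fin 2 → ℚ | ∃ n : ℕ, ∀ i, ∃ z : ℤ,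
        ((!![(1 : ℚ), 1; 2, 0]) ^ n).mulVec v i = (z : ℚ)} =
      {v | ∃ (a : ℚ) (b c : ℤ), (∃ (k : ℤ) (m : ℕ), a = (k : ℚ) / 2 ^ m) ∧
        v = a • ![1, 1] + (b : ℚ) • ![-1, 2] + (c : ℚ) • ![1, 0]} := by
  ext v
  simp only [Set.mem_setOf_eq]
  constructor
  · rintro ⟨n, hn⟩
    choose z hz using hn
    have hBv := Bpow n v
    have hw : ((!![(1:ℚ),1;2,0]) ^ n).mulVec v = fun i => ((z i : ℤ) : ℚ) := by
      funext i; exact hz i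
    rw [hw] at hBv
    have hcast : ((!![(0:ℤ),1;2,-1]) ^ n).map (Int.cast : ℤ → ℚ)
        = (!![(0:ℚ),1;2,-1]) ^ n := by
      rw [castpow]
      congr 1
      ext i j; fin_cases i <;> fin_cases j <;> simp
    set k : ℤ := ((!![(0:ℤ),1;2,-1]) ^ n) 1 0 * z 0 + ((!![(0:ℤ),1;2,-1]) ^ n) 1 1 * z 1
      with hk
    have hv1 : (2:ℚ) ^ n * v 1 = (k : ℚ) := by
      have h1 := congrFun hBv 1
      rw [← hcast] at h1
      simp only [mulVec, dotProduct, Fin.sum_univ_two, Matrix.map_apply,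
        Pi.smul_apply, smul_eq_mul] at h1
      push_cast [hk]
      linarith [h1]
    have hinv := invariant n v
    rw [hw] at hinv
    have h2 : ((z 1 : ℚ)) - (z 0 : ℚ) = (-1:ℚ) ^ n * (v 1 - v 0) := by simpa using hinv
    have hsq : ((-1:ℚ)) ^ n * ((-1:ℚ)) ^ n = 1 := by
      rw [← pow_add]; exact Even.neg_one_pow ⟨n, rfl⟩
    have hvc : ((((-1:ℤ) ^ n * (z 0 - z 1) : ℤ)) : ℚ) = v 0 - v 1 := by
      push_cast
      linear_combination (-((-1:ℚ) ^ n)) * h2 - (v 1 - v 0) * hsq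
    refine ⟨v 1, 0, (-1) ^ n * (z 0 - z 1), ⟨k, n, ?_⟩, ?_⟩
    · have h2n : ((2:ℚ) ^ n) ≠ 0 := by positivity
      rw [eq_div_iff h2n]
      linear_combination hv1
    · funext i
      fin_cases i
      · simp only [Pi.add_apply, Pi.smul_apply, smul_eq_mul, Matrix.cons_val_zero,
          Int.cast_zero, zero_mul, Fin.mk_zero]
        rw [hvc]; ring
      · simp only [Pi.add_apply, Pi.smul_apply, smul_eq_mul, Matrix.cons_val_one,
          Matrix.head_cons, Int.cast_zero, zero_mul, Fin.mk_one, Matrix.cons_val_zero]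
        ring
  · rintro ⟨a, b, c, ⟨k, m, ha⟩, hv⟩
    refine ⟨m, fun i => ?_⟩
    have h2m : ((2:ℚ) ^ m) ≠ 0 := by positivity
    have ha2 : a * 2 ^ m = (k : ℚ) := by rw [ha]; field_simp
    have hcv : ((!![(1:ℤ),1;2,0]) ^ m).map (Int.cast : ℤ → ℚ) = (!![(1:ℚ),1;2,0]) ^ m := by
      rw [castpow, castM]
    have hvm : ((!![(1:ℚ),1;2,0]) ^ m).mulVec v
        = a • (((2:ℚ) ^ m) • ![1,1]) + (b:ℚ) • (((-1:ℚ) ^ m) • ![-1,2])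
          + (c:ℚ) • ((((!![(1:ℤ),1;2,0]) ^ m).map (Int.cast : ℤ → ℚ)).mulVec ![1,0]) := by
      rw [hv, mulVec_add, mulVec_add, mulVec_smul, mulVec_smul, mulVec_smul, eig1, eig2, hcv]
    fin_cases i
    · refine ⟨k - b * (-1)^m + c * (((!![(1:ℤ),1;2,0]) ^ m) 0 0), ?_⟩
      rw [hvm]
      simp only [Pi.add_apply, Pi.smul_apply, smul_eq_mul, mulVec, dotProduct,
        Fin.sum_univ_two, Matrix.map_apply, Matrix.cons_val_zero, Matrix.cons_val_one,
        Matrix.head_cons, Fin.mk_zero]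
      push_cast
      linear_combination ha2
    · refine ⟨k + 2 * b * (-1)^m + c * (((!![(1:ℤ),1;2,0]) ^ m) 1 0), ?_⟩
      rw [hvm]
      simp only [Pi.add_apply, Pi.smul_apply, smul_eq_mul, mulVec, dotProduct,
        Fin.sum_univ_two, Matrix.map_apply, Matrix.cons_val_zero, Matrix.cons_val_one,
        Matrix.head_cons, Fin.mk_one]
      push_cast
      linear_combination ha2
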